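/- arXiv:1604.08619 — 2 statements merged into one kernel-verified Lean document; each statement's English description precedes it below -/
import Mathlib

section
/- Let a finite abelian group Γ act on a C*-algebra B with fixed point algebra A, and suppose there exists a map σ : Γ̂ → U(B) with σ(k) ∈ B_k for each k. Then the map b ↦ M(b) with entries M(b)_{hk} = σ(h)⁻¹ b_{h-k} σ(k) (where b_j = E_j(b) is the j-th spectral component) is an injective *-homomorphism from B into the algebra of Γ̂ × Γ̂ matrices with entries in A. -/
/-- For a regular covering (each spectral subspace contains a unitary `σ k`), the map
`b ↦ M(b)`, `M(b)_{hk} = σ(h)⁻¹ E_{h k⁻¹}(b) σ(k)`, is an injective *-homomorphism of `B`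
into the `Γ̂ × Γ̂` matrices with entries in the fixed point algebra `A`. -/
theorem stmt4 {B : Type*} [Ring B] [StarRing B] [Algebra ℂ B] [StarModule ℂ B]
    {Γ : Type*} [CommGroup Γ] [Fintype Γ] [Fintype (Γ →* ℂˣ)] [DecidableEq (Γ →* ℂˣ)]
    (γ : Γ → (B ≃⋆ₐ[ℂ] B))
    (hγ1 : ∀ b : B, γ 1 b = b)
    (hγmul : ∀ g g' (b : B), γ g (γ g' b) = γ (g * g') b)
    (σ : (Γ →* ℂˣ) → Bˣ)
    (hσ : ∀ (k : Γ →* ℂˣ) (g : Γ), γ g (σ k : B) = (k g : ℂ) • (σ k : B))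
    (hσstar : ∀ k : Γ →* ℂˣ, star ((σ k : Bˣ) : B) = (((σ k)⁻¹ : Bˣ) : B))
    (hσ1 : σ 1 = 1)
    (M : B → Matrix (Γ →* ℂˣ) (Γ →* ℂˣ) B)
    (hM : ∀ b h k, M b h k =
      (((σ h)⁻¹ : Bˣ) : B) *
        ((Fintype.card Γ : ℂ)⁻¹ •
          ∑ g : Γ, ((((h * k⁻¹) g)⁻¹ : ℂˣ) : ℂ) • γ g b) *
        ((σ k : Bˣ) : B)) :
    Function.Injective M ∧
    (∀ b b', M (b + b') = M b + M b') ∧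
    (∀ b b', M (b * b') = M b * M b') ∧
    (∀ b, M (star b) = star (M b)) ∧
    (∀ b h k g, γ g (M b h k) = M b h k) := by
  classical
  have hexp : NeZero ((Monoid.exponent Γ : ℂ)) :=
    ⟨Nat.cast_ne_zero.mpr Monoid.exponent_ne_zero_of_finite⟩
  set c : ℂ := (Fintype.card Γ : ℂ) with hcdef
  have hc : c ≠ 0 := Nat.cast_ne_zero.mpr Fintype.card_ne_zero
  have hcard : (Fintype.card (Γ →* ℂˣ) : ℂ) = c := by
    obtain ⟨e⟩ := CommGroup.monoidHom_mulEquiv_of_hasEnoughRootsOfUnity Γ ℂ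
    rw [hcdef]
    exact_mod_cast congrArg (Nat.cast : ℕ → ℂ) (Fintype.card_congr e.toEquiv)
  have orth : ∀ g : Γ, (∑ j : Γ →* ℂˣ, ((j g : ℂˣ) : ℂ)) = if g = 1 then c else 0 := by
    intro g
    split_ifs with hg
    · subst hg; simp [hcard]
    · obtain ⟨φ, hφ⟩ := CommGroup.exists_apply_ne_one_of_hasEnoughRootsOfUnity Γ ℂ hg
      have key : ((φ g : ℂˣ) : ℂ) * ∑ j : Γ →* ℂˣ, ((j g : ℂˣ) : ℂ)
          = ∑ j : Γ →* ℂˣ, ((j g : ℂˣ) : ℂ) := by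
        rw [Finset.mul_sum,
          ← Equiv.sum_comp (Equiv.mulLeft φ) (fun j : Γ →* ℂˣ => ((j g : ℂˣ) : ℂ))]
        exact Finset.sum_congr rfl fun j _ => by
          simp [MonoidHom.mul_apply]
      have h2 : (((φ g : ℂˣ) : ℂ) - 1) * ∑ j : Γ →* ℂˣ, ((j g : ℂˣ) : ℂ) = 0 := by
        rw [sub_mul, one_mul, key, sub_self]
      rcases mul_eq_zero.mp h2 with h | h
      · exact absurd (Units.val_eq_one.mp (sub_eq_zero.mp h)) hφ
      · exact h
  have hconj : ∀ (j : Γ →* ℂˣ) (g : Γ),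
      (starRingEnd ℂ) ((j g : ℂˣ) : ℂ) = (((j g)⁻¹ : ℂˣ) : ℂ) := by
    intro j g
    have hpow : ((j g : ℂˣ) : ℂ) ^ (Fintype.card Γ) = 1 := by
      rw [← Units.val_pow_eq_pow_val, ← map_pow, pow_card_eq_one, map_one, Units.val_one]
    rw [← Complex.inv_eq_conj (Complex.norm_eq_one_of_pow_eq_one hpow Fintype.card_ne_zero)]
    simp
  set F : (Γ →* ℂˣ) → B → B :=
    fun j b => c⁻¹ • ∑ g : Γ, ((((j g)⁻¹ : ℂˣ)) : ℂ) • γ g b with hFdef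
  have hMF : ∀ b h k, M b h k = (((σ h)⁻¹ : Bˣ) : B) * F (h * k⁻¹) b * ((σ k : Bˣ) : B) :=
    fun b h k => hM b h k
  have hFadd : ∀ j (b b' : B), F j (b + b') = F j b + F j b' := by
    intro j b b'
    simp [hFdef, map_add, smul_add, Finset.sum_add_distrib]
  have hγF : ∀ (g : Γ) (j : Γ →* ℂˣ) (b : B), γ g (F j b) = ((j g : ℂˣ) : ℂ) • F j b := by
    intro g j b
    simp only [hFdef]
    rw [map_smul, map_sum]
    simp only [map_smul, hγmul]
    rw [smul_comm]
    congr 1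
    rw [Finset.smul_sum]
    rw [← Equiv.sum_comp (Equiv.mulLeft g⁻¹)
      (fun x => ((((j x)⁻¹ : ℂˣ)) : ℂ) • γ (g * x) b)]
    refine Finset.sum_congr rfl fun x _ => ?_
    simp only [Equiv.coe_mulLeft, mul_inv_cancel_left, map_mul, map_inv, mul_inv_rev,
      inv_inv, Units.val_mul, smul_smul]
    congr 1
    ring
  have hsumF : ∀ b : B, (∑ j : Γ →* ℂˣ, F j b) = b := by
    intro b
    simp only [hFdef]
    rw [← Finset.smul_sum, Finset.sum_comm]
    have hg : ∀ g : Γ, (∑ j : Γ →* ℂˣ, (((j g)⁻¹ : ℂˣ) : ℂ) • γ g b)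
        = (if g = 1 then c else 0) • γ g b := by
      intro g
      rw [← Finset.sum_smul]
      congr 1
      have h1 : (∑ j : Γ →* ℂˣ, (((j g)⁻¹ : ℂˣ) : ℂ))
          = ∑ j : Γ →* ℂˣ, ((j g⁻¹ : ℂˣ) : ℂ) := by
        simp [map_inv]
      rw [h1, orth g⁻¹, inv_eq_one]
    rw [Finset.sum_congr rfl fun g _ => hg g]
    simp only [ite_smul, zero_smul]
    rw [Finset.sum_ite_eq' Finset.univ 1 (fun g => c • γ g b)]
    simp [smul_smul, inv_mul_cancel₀ hc, hγ1]
  have hγinv : ∀ (g : Γ) (h : Γ →* ℂˣ),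
      γ g (((σ h)⁻¹ : Bˣ) : B) = (((h g)⁻¹ : ℂˣ) : ℂ) • (((σ h)⁻¹ : Bˣ) : B) := by
    intro g h
    have h2 : γ g ((σ h : Bˣ) : B) * ((((h g)⁻¹ : ℂˣ) : ℂ) • (((σ h)⁻¹ : Bˣ) : B)) = 1 := by
      rw [hσ, smul_mul_smul_comm, ← Units.val_mul, mul_inv_cancel, Units.val_one,
        ← Units.val_mul, mul_inv_cancel, Units.val_one, one_smul]
    have h3 : γ g (((σ h)⁻¹ : Bˣ) : B) * γ g ((σ h : Bˣ) : B) = 1 := by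
      rw [← map_mul, ← Units.val_mul, inv_mul_cancel, Units.val_one, map_one]
    calc γ g (((σ h)⁻¹ : Bˣ) : B)
        = γ g (((σ h)⁻¹ : Bˣ) : B) *
            (γ g ((σ h : Bˣ) : B) * ((((h g)⁻¹ : ℂˣ) : ℂ) • (((σ h)⁻¹ : Bˣ) : B))) := by
          rw [h2, mul_one]
      _ = (γ g (((σ h)⁻¹ : Bˣ) : B) * γ g ((σ h : Bˣ) : B)) *
            ((((h g)⁻¹ : ℂˣ) : ℂ) • (((σ h)⁻¹ : Bˣ) : B)) := by rw [mul_assoc]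
      _ = (((h g)⁻¹ : ℂˣ) : ℂ) • (((σ h)⁻¹ : Bˣ) : B) := by rw [h3, one_mul]
  have hstarF : ∀ (j : Γ →* ℂˣ) (b : B), star (F j b) = F j⁻¹ (star b) := by
    intro j b
    simp only [hFdef]
    rw [star_smul, star_sum]
    have hsc : star (c⁻¹ : ℂ) = c⁻¹ := by
      rw [hcdef]
      simp [Complex.star_def, map_inv₀]
    rw [hsc]
    congr 1
    refine Finset.sum_congr rfl fun g _ => ?_
    rw [star_smul, ← map_star]
    have h4 := hconj j⁻¹ g
    simp only [MonoidHom.inv_apply, inv_inv] at h4 ⊢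
    rw [Complex.star_def, h4]
  have key : ∀ (j : Γ →* ℂˣ) (b b' : B),
      (∑ l : Γ →* ℂˣ, F (j * l⁻¹) b * F l b') = F j (b * b') := by
    intro j b b'
    simp only [hFdef]
    have expand : ∀ l : Γ →* ℂˣ,
        (c⁻¹ • ∑ g : Γ, ((((j * l⁻¹) g)⁻¹ : ℂˣ) : ℂ) • γ g b) *
          (c⁻¹ • ∑ g' : Γ, (((l g')⁻¹ : ℂˣ) : ℂ) • γ g' b')
        = ∑ g : Γ, ∑ g' : Γ,
            (c⁻¹ * c⁻¹ * ((((j g)⁻¹ : ℂˣ)) : ℂ) * ((l (g * g'⁻¹) : ℂˣ) : ℂ)) •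
              (γ g b * γ g' b') := by
      intro l
      rw [smul_mul_smul_comm, Finset.sum_mul_sum, Finset.smul_sum]
      refine Finset.sum_congr rfl fun g _ => ?_
      rw [Finset.smul_sum]
      refine Finset.sum_congr rfl fun g' _ => ?_
      rw [smul_mul_smul_comm, smul_smul]
      congr 1
      simp only [MonoidHom.mul_apply, MonoidHom.inv_apply, map_mul, map_inv, mul_inv_rev,
        inv_inv, Units.val_mul]
      ring
    rw [Finset.sum_congr rfl fun l _ => expand l, Finset.sum_comm]
    have inner : ∀ g : Γ,
        (∑ l : Γ →* ℂˣ, ∑ g' : Γ,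
          (c⁻¹ * c⁻¹ * (((j g)⁻¹ : ℂˣ) : ℂ) * ((l (g * g'⁻¹) : ℂˣ) : ℂ)) • (γ g b * γ g' b'))
        = (c⁻¹ * (((j g)⁻¹ : ℂˣ) : ℂ)) • (γ g b * γ g b') := by
      intro g
      rw [Finset.sum_comm]
      have hin : ∀ g' : Γ,
          (∑ l : Γ →* ℂˣ,
            (c⁻¹ * c⁻¹ * (((j g)⁻¹ : ℂˣ) : ℂ) * ((l (g * g'⁻¹) : ℂˣ) : ℂ)) • (γ g b * γ g' b'))
          = if g = g' then (c⁻¹ * (((j g)⁻¹ : ℂˣ) : ℂ)) • (γ g b * γ g' b') else 0 := by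
        intro g'
        rw [← Finset.sum_smul]
        have hco : (∑ l : Γ →* ℂˣ,
              c⁻¹ * c⁻¹ * (((j g)⁻¹ : ℂˣ) : ℂ) * ((l (g * g'⁻¹) : ℂˣ) : ℂ))
            = c⁻¹ * c⁻¹ * (((j g)⁻¹ : ℂˣ) : ℂ) * (if g = g' then c else 0) := by
          rw [← Finset.mul_sum, orth (g * g'⁻¹)]
          congr 1
          simp [mul_inv_eq_one]
        rw [hco]
        split_ifs with hgg
        · congr 1
          field_simp
        · simp
      rw [Finset.sum_congr rfl fun g' _ => hin g',
        Finset.sum_ite_eq Finset.univ g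
          (fun g' => (c⁻¹ * (((j g)⁻¹ : ℂˣ) : ℂ)) • (γ g b * γ g' b'))]
      simp
    rw [Finset.sum_congr rfl fun g _ => inner g, Finset.smul_sum]
    refine Finset.sum_congr rfl fun g _ => ?_
    rw [map_mul, smul_smul]
  refine ⟨?_, ?_, ?_, ?_, ?_⟩
  · -- injective
    have hFM : ∀ (b : B) (j : Γ →* ℂˣ), F j b = ((σ j : Bˣ) : B) * M b j 1 := by
      intro b j
      rw [hMF, hσ1]
      simp only [inv_one, mul_one, Units.val_one]
      rw [show j * (1 : Γ →* ℂˣ)⁻¹ = j from by ext x; simp, Units.mul_inv_cancel_left]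
    intro b b' h
    rw [← hsumF b, ← hsumF b']
    exact Finset.sum_congr rfl fun j _ => by rw [hFM, hFM, h]
  · intro b b'
    ext h k
    rw [Matrix.add_apply, hMF, hMF, hMF, hFadd, mul_add, add_mul]
  · intro b b'
    ext h k
    rw [Matrix.mul_apply]
    have step1 : ∀ l : Γ →* ℂˣ, M b h l * M b' l k
        = (((σ h)⁻¹ : Bˣ) : B) * (F (h * l⁻¹) b * F (l * k⁻¹) b') * ((σ k : Bˣ) : B) := by
      intro l
      rw [hMF, hMF]
      simp only [mul_assoc, Units.mul_inv_cancel_left]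
    rw [Finset.sum_congr rfl fun l _ => step1 l, ← Finset.sum_mul, ← Finset.mul_sum, hMF]
    congr 2
    rw [← key (h * k⁻¹) b b',
      ← Equiv.sum_comp (Equiv.mulRight k) (fun l => F (h * l⁻¹) b * F (l * k⁻¹) b')]
    refine Finset.sum_congr rfl fun l _ => ?_
    simp only [Equiv.coe_mulRight, mul_inv_cancel_right]
    rw [show h * (l * k)⁻¹ = h * k⁻¹ * l⁻¹ from by ext x; simp [mul_assoc, mul_comm, mul_left_comm]]
  · intro b
    ext h k
    rw [Matrix.star_apply, hMF (star b) h k, hMF b k h, star_mul, star_mul, hσstar, hstarF]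
    have h5 : star ((((σ k)⁻¹ : Bˣ) : B)) = ((σ k : Bˣ) : B) := by
      rw [← hσstar k, star_star]
    rw [h5, show (k * h⁻¹)⁻¹ = h * k⁻¹ from by ext x; simp [mul_comm]]
    simp only [mul_assoc]
  · intro b h k g
    rw [hMF, map_mul, map_mul, hγinv, hγF, hσ]
    have hone : ((k g : ℂˣ) : ℂ) * (((((h * k⁻¹) g) : ℂˣ) : ℂ) * (((h g)⁻¹ : ℂˣ) : ℂ)) = 1 := by
      rw [← Units.val_mul, ← Units.val_mul]
      rw [show (k g * ((h * k⁻¹) g * (h g)⁻¹) : ℂˣ) = 1 by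
        simp only [MonoidHom.mul_apply, MonoidHom.inv_apply]
        rw [mul_comm (h g) (k g)⁻¹]
        group]
      exact Units.val_one
    simp only [smul_mul_assoc, mul_smul_comm, smul_smul]
    rw [hone, one_smul]
end

section
/- In M₃(ℂ) with the ℤ/2 action γ₀ = id, γ₁ = Ad(J) where J = diag(1,-1,-1), the spectral subspace B₁ = {x : JxJ⁻¹ = -x} consists of matrices of the form [[0,a,b],[c,0,0],[d,0,0]] and contains no invertible element. -/
/-- In `M₃(ℂ)` with the `ℤ/2`-action `γ₁ = Ad(J)`, `J = diag(1,-1,-1)`, the spectral subspace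
`B₁ = {x : J x J⁻¹ = -x}` consists exactly of the matrices of the form
`[[0,a,b],[c,0,0],[d,0,0]]`, and it contains no invertible element. -/
theorem stmt7 (J : Matrix (Fin 3) (Fin 3) ℂ)
    (hJ : J = Matrix.diagonal ![1, -1, -1]) :
    ∀ x : Matrix (Fin 3) (Fin 3) ℂ,
      ((J * x * J⁻¹ = -x) ↔
        (x 0 0 = 0 ∧ x 1 1 = 0 ∧ x 1 2 = 0 ∧ x 2 1 = 0 ∧ x 2 2 = 0)) ∧
      (J * x * J⁻¹ = -x → ¬ IsUnit x) := by
  subst hJ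
  have hJinv : (Matrix.diagonal ![1, -1, -1] : Matrix (Fin 3) (Fin 3) ℂ)⁻¹
      = Matrix.diagonal ![1, -1, -1] := by
    apply Matrix.inv_eq_right_inv
    ext i j
    fin_cases i <;> fin_cases j <;>
      simp [Matrix.mul_apply, Fin.sum_univ_three, Matrix.diagonal]
  intro x
  have key : (Matrix.diagonal ![1, -1, -1] * x * (Matrix.diagonal ![1, -1, -1] : Matrix (Fin 3) (Fin 3) ℂ)⁻¹ = -x) ↔
      (x 0 0 = 0 ∧ x 1 1 = 0 ∧ x 1 2 = 0 ∧ x 2 1 = 0 ∧ x 2 2 = 0) := by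
    rw [hJinv]
    constructor
    · intro h
      rw [← Matrix.ext_iff] at h
      have e00 := h 0 0; have e11 := h 1 1; have e12 := h 1 2
      have e21 := h 2 1; have e22 := h 2 2
      simp [Matrix.mul_apply, Fin.sum_univ_three, Matrix.diagonal] at e00 e11 e12 e21 e22
      refine ⟨by linear_combination e00/2, by linear_combination e11/2, by linear_combination e12/2, by linear_combination e21/2, by linear_combination e22/2⟩
    · intro ⟨h1, h2, h3, h4, h5⟩
      ext i j
      fin_cases i <;> fin_cases j <;>
        simp [Matrix.mul_apply, Fin.sum_univ_three, Matrix.diagonal, h1, h2, h3, h4, h5]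
  refine ⟨key, fun h hu => ?_⟩
  obtain ⟨h1, h2, h3, h4, h5⟩ := key.mp h
  have hdet : x.det = 0 := by
    rw [Matrix.det_fin_three, h1, h2, h3, h4, h5]; ring
  have := (Matrix.isUnit_iff_isUnit_det x).mp hu
  rw [hdet] at this
  exact this.ne_zero rfl
end
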